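/- There exists m₀ ∈ ℕ such that for every m ≥ m₀, every i ∈ {1,…,m}, every ε ∈ [-1,1] with |ε| ≤ 4·√(log m / s_1), and every y ∈ ℤ with |y + ε·s_i| > 4·√(log m · s_i), it holds that V(s_i, ε)(−y) < 1/m² or V(s_i, ε)(−y) > 1 − 1/m². -/

import Mathlib

noncomputable def binPMF (n : ℕ) (ε : ℝ) (k : ℤ) : ℝ :=
  if ((n : ℤ) + k) % 2 = 0 ∧ -(n : ℤ) ≤ k ∧ k ≤ (n : ℤ) then
    (n.choose (((n : ℤ) + k) / 2).toNat : ℝ) *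
      ((1 + ε) / 2) ^ (((n : ℤ) + k) / 2).toNat *
      ((1 - ε) / 2) ^ (((n : ℤ) - k) / 2).toNat
  else 0

noncomputable def binTail (n : ℕ) (ε : ℝ) (k : ℤ) : ℝ :=
  ∑ t ∈ Finset.Icc k (n : ℤ), binPMF n ε t

def lRound (m i : ℕ) : ℕ := m + 1 - i

def sRound (m i : ℕ) : ℕ := ∑ j ∈ Finset.Icc i m, lRound m j

open Real

lemma g_pos {ε : ℝ} (hε : ε ∈ Set.Icc (-1:ℝ) 1) (x : ℝ) :
    0 < Real.cosh x + ε * Real.sinh x := by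
  obtain ⟨h1, h2⟩ := hε
  have hc := Real.cosh_pos x
  have hcs := Real.cosh_sq_sub_sinh_sq x
  have habs : |ε * Real.sinh x| ≤ |Real.sinh x| := by
    rw [abs_mul]
    have h3 : |ε| ≤ 1 := abs_le.2 ⟨h1, h2⟩
    nlinarith [abs_nonneg (Real.sinh x)]
  have h4 : (Real.cosh x - |Real.sinh x|) * (Real.cosh x + |Real.sinh x|) = 1 := by
    have : |Real.sinh x| ^ 2 = Real.sinh x ^ 2 := sq_abs _
    nlinarith
  have h5 : 0 < Real.cosh x + |Real.sinh x| := by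
    have := abs_nonneg (Real.sinh x); linarith
  have h6 : 0 < Real.cosh x - |Real.sinh x| := by
    nlinarith
  have := (abs_le.1 habs).1
  linarith

lemma g_sq_ge {ε : ℝ} (x : ℝ) :
    1 - ε ^ 2 ≤ (Real.cosh x + ε * Real.sinh x) ^ 2 := by
  have hcs := Real.cosh_sq_sub_sinh_sq x
  nlinarith [sq_nonneg (Real.sinh x + ε * Real.cosh x)]

/-- Hoeffding's lemma for ±1 random variables. -/
lemma hoeffding_pm1 {ε : ℝ} (hε : ε ∈ Set.Icc (-1:ℝ) 1) (lam : ℝ) :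
    (1 + ε) / 2 * Real.exp lam + (1 - ε) / 2 * Real.exp (-lam)
      ≤ Real.exp (ε * lam + lam ^ 2 / 2) := by
  set g : ℝ → ℝ := fun x => Real.cosh x + ε * Real.sinh x with hg
  set g' : ℝ → ℝ := fun x => Real.sinh x + ε * Real.cosh x with hg'
  have hgpos : ∀ x, 0 < g x := g_pos hε
  have hgd : ∀ x, HasDerivAt g (g' x) x := by
    intro x
    exact
      (Real.hasDerivAt_cosh x).add ((Real.hasDerivAt_sinh x).const_mul ε)
  have hg'd : ∀ x, HasDerivAt g' (g x) x := by
    intro x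
    exact
      (Real.hasDerivAt_sinh x).add ((Real.hasDerivAt_cosh x).const_mul ε)
  -- ψ is the derivative of φ := fun x => ε * x + x^2/2 - log (g x)
  set ψ : ℝ → ℝ := fun x => ε + x - g' x / g x with hψ
  set φ : ℝ → ℝ := fun x => ε * x + x ^ 2 / 2 - Real.log (g x) with hφ
  have hφd : ∀ x, HasDerivAt φ (ψ x) x := by
    intro x
    have h1 : HasDerivAt (fun x => Real.log (g x)) (g' x / g x) x :=
      (hgd x).log (hgpos x).ne'
    have h2 : HasDerivAt (fun x : ℝ => ε * x + x ^ 2 / 2) (ε + x) x := by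
      have := ((hasDerivAt_id x).const_mul ε).add
        (((hasDerivAt_pow 2 x)).div_const 2)
      convert this using 1
      · rfl
      · rfl
      · rfl
      · norm_num
    exact h2.sub h1
  have hψd : ∀ x, HasDerivAt ψ (1 - (1 - ε ^ 2) / g x ^ 2) x := by
    intro x
    have hdiv : HasDerivAt (fun x => g' x / g x)
        ((g x * g x - g' x * g' x) / g x ^ 2) x :=
      (hg'd x).div (hgd x) (hgpos x).ne'
    have h2 : HasDerivAt (fun x : ℝ => ε + x) 1 x := by
      simpa using (hasDerivAt_id x).const_add ε
    have h3 := h2.sub hdiv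
    have he : g x * g x - g' x * g' x = 1 - ε ^ 2 := by
      have := Real.cosh_sq_sub_sinh_sq x
      simp only [hg, hg']
      nlinarith
    rw [he] at h3
    exact h3
  have hψmono : Monotone ψ := by
    apply monotone_of_hasDerivAt_nonneg hψd
    intro x
    have h1 := g_sq_ge (ε := ε) x
    have h2 : (0:ℝ) < g x ^ 2 := by
      have := hgpos x; positivity
    have : (1 - ε ^ 2) / g x ^ 2 ≤ 1 := by
      rw [div_le_one h2]; exact h1
    simp only [Pi.zero_apply]
    linarith
  have hψ0 : ψ 0 = 0 := by simp [hψ, hg, hg']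
  have hφ0 : φ 0 = 0 := by simp [hφ, hg]
  -- φ ≥ 0 everywhere
  have hφnonneg : ∀ x, 0 ≤ φ x := by
    intro x
    rcases le_or_gt 0 x with hx | hx
    · have hmono : MonotoneOn φ (Set.Ici (0:ℝ)) := by
        apply monotoneOn_of_hasDerivWithinAt_nonneg (convex_Ici 0)
          (fun y _ => (hφd y).continuousAt.continuousWithinAt)
          (fun y _ => (hφd y).hasDerivWithinAt)
        intro y hy
        rw [interior_Ici] at hy
        have : ψ 0 ≤ ψ y := hψmono (le_of_lt hy)
        rw [hψ0] at this; exact this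
      have := hmono (Set.self_mem_Ici) (Set.mem_Ici.2 hx) hx
      rw [hφ0] at this; exact this
    · have hmono : AntitoneOn φ (Set.Iic (0:ℝ)) := by
        apply antitoneOn_of_hasDerivWithinAt_nonpos (convex_Iic 0)
          (fun y _ => (hφd y).continuousAt.continuousWithinAt)
          (fun y _ => (hφd y).hasDerivWithinAt)
        intro y hy
        rw [interior_Iic] at hy
        have : ψ y ≤ ψ 0 := hψmono (le_of_lt hy)
        rw [hψ0] at this; exact this
      have := hmono (Set.mem_Iic.2 hx.le) (Set.self_mem_Iic) hx.le
      rw [hφ0] at this; exact this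
  -- conclude
  have key : g lam ≤ Real.exp (ε * lam + lam ^ 2 / 2) := by
    have h1 := hφnonneg lam
    have h2 : Real.log (g lam) ≤ ε * lam + lam ^ 2 / 2 := by
      simp only [hφ] at h1; linarith
    calc g lam = Real.exp (Real.log (g lam)) := (Real.exp_log (hgpos lam)).symm
      _ ≤ _ := Real.exp_le_exp.2 h2
  have heq : (1 + ε) / 2 * Real.exp lam + (1 - ε) / 2 * Real.exp (-lam) = g lam := by
    simp only [hg, Real.cosh_eq, Real.sinh_eq]; ring
  rw [heq]; exact key

lemma binPMF_nonneg {n : ℕ} {ε : ℝ} (hε : ε ∈ Set.Icc (-1:ℝ) 1) (k : ℤ) :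
    0 ≤ binPMF n ε k := by
  obtain ⟨h1, h2⟩ := hε
  unfold binPMF
  split
  · have hp : (0:ℝ) ≤ (1 + ε) / 2 := by linarith
    have hq : (0:ℝ) ≤ (1 - ε) / 2 := by linarith
    positivity
  · exact le_refl _
    
lemma mgf_sum (n : ℕ) (ε : ℝ) (lam : ℝ) :
    ∑ t ∈ Finset.Icc (-(n:ℤ)) n, binPMF n ε t * Real.exp (lam * t)
      = ((1 + ε) / 2 * Real.exp lam + (1 - ε) / 2 * Real.exp (-lam)) ^ n := by
  classical
  set f : ℤ → ℝ := fun t => binPMF n ε t * Real.exp (lam * t) with hf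
  set img := (Finset.range (n+1)).image (fun j : ℕ => 2*(j:ℤ) - n) with himg
  have hsub : img ⊆ Finset.Icc (-(n:ℤ)) n := by
    intro t ht
    simp only [himg, Finset.mem_image, Finset.mem_range] at ht
    obtain ⟨j, hj, rfl⟩ := ht
    simp only [Finset.mem_Icc]; omega
  have hzero : ∀ t ∈ Finset.Icc (-(n:ℤ)) n, t ∉ img → f t = 0 := by
    intro t ht hnot
    simp only [hf, binPMF]
    rw [if_neg, zero_mul]
    intro ⟨hpar, hlo, hhi⟩
    apply hnot
    simp only [himg, Finset.mem_image, Finset.mem_range]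
    refine ⟨(((n:ℤ) + t) / 2).toNat, ?_, ?_⟩
    · omega
    · omega
  have h1 : ∑ t ∈ Finset.Icc (-(n:ℤ)) n, f t = ∑ t ∈ img, f t :=
    (Finset.sum_subset hsub hzero).symm
  have h2 : ∑ t ∈ img, f t
      = ∑ j ∈ Finset.range (n+1), f (2*(j:ℤ) - n) := by
    rw [himg, Finset.sum_image]
    intro a _ b _ hab
    simp only at hab
    omega
  have h3 : ∀ j ∈ Finset.range (n+1),
      f (2*(j:ℤ) - n)
        = ((1 + ε) / 2 * Real.exp lam) ^ j *
            ((1 - ε) / 2 * Real.exp (-lam)) ^ (n - j) * (n.choose j : ℝ) := by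
    intro j hj
    rw [Finset.mem_range] at hj
    have hjn : j ≤ n := by omega
    simp only [hf, binPMF]
    rw [if_pos]
    · have ha : (((n:ℤ) + (2*(j:ℤ) - n)) / 2).toNat = j := by omega
      have hb : (((n:ℤ) - (2*(j:ℤ) - n)) / 2).toNat = n - j := by omega
      rw [ha, hb]
      have hexp : Real.exp (lam * ((2*(j:ℤ) - n : ℤ) : ℝ))
          = Real.exp lam ^ j * Real.exp (-lam) ^ (n - j) := by
        rw [← Real.exp_nat_mul, ← Real.exp_nat_mul, ← Real.exp_add]
        congr 1
        push_cast [Nat.cast_sub hjn]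
        ring
      rw [hexp, mul_pow, mul_pow]
      ring
    · refine ⟨?_, ?_, ?_⟩ <;> omega
  rw [h1, h2, Finset.sum_congr rfl h3, add_pow]

lemma sum_pmf_one (n : ℕ) (ε : ℝ) :
    ∑ t ∈ Finset.Icc (-(n:ℤ)) n, binPMF n ε t = 1 := by
  have h := mgf_sum n ε 0
  simp only [zero_mul, Real.exp_zero, mul_one, neg_zero] at h
  rw [h]
  have : (1 + ε) / 2 + (1 - ε) / 2 = 1 := by ring
  rw [this, one_pow]

lemma binTail_le_chernoff {n : ℕ} {ε : ℝ} (hε : ε ∈ Set.Icc (-1:ℝ) 1)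
    {lam : ℝ} (hlam : 0 ≤ lam) (k : ℤ) :
    binTail n ε k ≤ Real.exp (-(lam * k)) *
      ((1 + ε) / 2 * Real.exp lam + (1 - ε) / 2 * Real.exp (-lam)) ^ n := by
  have step1 : binTail n ε k ≤
      Real.exp (-(lam * k)) * ∑ t ∈ Finset.Icc k (n:ℤ), binPMF n ε t * Real.exp (lam * t) := by
    rw [Finset.mul_sum]
    apply Finset.sum_le_sum
    intro t ht
    rw [Finset.mem_Icc] at ht
    have h1 : (1:ℝ) ≤ Real.exp (-(lam * k)) * Real.exp (lam * t) := by
      rw [← Real.exp_add]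
      have : (0:ℝ) ≤ -(lam * k) + lam * t := by
        have hkt : (k:ℝ) ≤ (t:ℝ) := by exact_mod_cast ht.1
        nlinarith
      calc (1:ℝ) = Real.exp 0 := Real.exp_zero.symm
        _ ≤ _ := Real.exp_le_exp.2 this
    have h2 := binPMF_nonneg (n := n) hε t
    calc binPMF n ε t = binPMF n ε t * 1 := (mul_one _).symm
      _ ≤ binPMF n ε t * (Real.exp (-(lam * k)) * Real.exp (lam * t)) := by
          exact mul_le_mul_of_nonneg_left h1 h2
      _ = Real.exp (-(lam * k)) * (binPMF n ε t * Real.exp (lam * t)) := by ring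
  have step2 : ∑ t ∈ Finset.Icc k (n:ℤ), binPMF n ε t * Real.exp (lam * t)
      ≤ ∑ t ∈ Finset.Icc (-(n:ℤ)) n, binPMF n ε t * Real.exp (lam * t) := by
    have hA : ∑ t ∈ Finset.Icc k (n:ℤ), binPMF n ε t * Real.exp (lam * t)
        = ∑ t ∈ Finset.Icc k (n:ℤ) ∩ Finset.Icc (-(n:ℤ)) n,
            binPMF n ε t * Real.exp (lam * t) := by
      apply (Finset.sum_subset Finset.inter_subset_left _).symm
      intro t ht hnot
      rw [Finset.mem_Icc] at ht
      have htS : t ∉ Finset.Icc (-(n:ℤ)) n := by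
        intro hc
        exact hnot (Finset.mem_inter.2 ⟨Finset.mem_Icc.2 ht, hc⟩)
      rw [Finset.mem_Icc] at htS
      have : binPMF n ε t = 0 := by
        rw [binPMF, if_neg]
        intro ⟨_, hlo, hhi⟩
        exact htS ⟨hlo, hhi⟩
      rw [this, zero_mul]
    rw [hA]
    apply Finset.sum_le_sum_of_subset_of_nonneg Finset.inter_subset_right
    intro t _ _
    have := binPMF_nonneg (n := n) hε t
    positivity
  calc binTail n ε k ≤ _ := step1
    _ ≤ Real.exp (-(lam * k)) *
        ∑ t ∈ Finset.Icc (-(n:ℤ)) n, binPMF n ε t * Real.exp (lam * t) := by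
        apply mul_le_mul_of_nonneg_left step2 (Real.exp_nonneg _)
    _ = _ := by rw [mgf_sum]

lemma binPMF_neg (n : ℕ) (ε : ℝ) (t : ℤ) : binPMF n ε (-t) = binPMF n (-ε) t := by
  by_cases h : ((n:ℤ) + t) % 2 = 0 ∧ -(n:ℤ) ≤ t ∧ t ≤ (n:ℤ)
  · have h' : ((n:ℤ) + -t) % 2 = 0 ∧ -(n:ℤ) ≤ -t ∧ -t ≤ (n:ℤ) := by omega
    rw [binPMF, binPMF, if_pos h', if_pos h]
    have h1 : (((n:ℤ) + -t)/2).toNat = (((n:ℤ) - t)/2).toNat := by omega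
    have h2 : (((n:ℤ) - -t)/2).toNat = (((n:ℤ) + t)/2).toNat := by omega
    rw [h1, h2]
    have h3 : (((n:ℤ) + t)/2).toNat = n - (((n:ℤ) - t)/2).toNat := by omega
    have h4 : (((n:ℤ) - t)/2).toNat ≤ n := by omega
    rw [h3, Nat.choose_symm h4]
    have e1 : (1 + -ε) / 2 = (1 - ε)/2 := by ring
    have e2 : (1 - -ε) / 2 = (1 + ε)/2 := by ring
    rw [e1, e2]
    ring
  · have h' : ¬(((n:ℤ) + -t) % 2 = 0 ∧ -(n:ℤ) ≤ -t ∧ -t ≤ (n:ℤ)) := by omega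
    rw [binPMF, binPMF, if_neg h', if_neg h]

lemma binTail_compl (n : ℕ) (ε : ℝ) (k : ℤ) :
    binTail n ε k + binTail n (-ε) (1 - k) = 1 := by
  have hre : binTail n (-ε) (1 - k) = ∑ t ∈ Finset.Icc (-(n:ℤ)) (k-1), binPMF n ε t := by
    rw [binTail]
    apply Finset.sum_nbij' (fun t => -t) (fun t => -t)
    · intro a ha; rw [Finset.mem_Icc] at *; omega
    · intro a ha; rw [Finset.mem_Icc] at *; omega
    · intro a _; ring
    · intro a _; ring
    · intro a _
      rw [← binPMF_neg]
  rw [binTail, hre]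
  rw [← Finset.sum_union]
  · have hsub : Finset.Icc (-(n:ℤ)) n ⊆ Finset.Icc k (n:ℤ) ∪ Finset.Icc (-(n:ℤ)) (k-1) := by
      intro t ht
      rw [Finset.mem_union, Finset.mem_Icc, Finset.mem_Icc] at *
      omega
    have hz : ∀ t ∈ Finset.Icc k (n:ℤ) ∪ Finset.Icc (-(n:ℤ)) (k-1),
        t ∉ Finset.Icc (-(n:ℤ)) n → binPMF n ε t = 0 := by
      intro t ht hnot
      rw [Finset.mem_Icc] at hnot
      rw [binPMF, if_neg]
      intro ⟨_, hlo, hhi⟩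
      exact hnot ⟨hlo, hhi⟩
    rw [← Finset.sum_subset hsub hz]
    exact sum_pmf_one n ε
  · rw [Finset.disjoint_left]
    intro t ht ht'
    rw [Finset.mem_Icc] at *
    omega

lemma tail_small {n : ℕ} (hn : 1 ≤ n) {ε : ℝ} (hε : ε ∈ Set.Icc (-1:ℝ) 1)
    {L : ℝ} (hL : 0 < L) {k : ℤ}
    (hk : ε * n + 4 * Real.sqrt (L * n) ≤ (k:ℝ)) :
    binTail n ε k ≤ Real.exp (-(8 * L)) := by
  have hn' : (0:ℝ) < n := by exact_mod_cast hn
  set D := 4 * Real.sqrt (L * n) with hDdef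
  have hLn : 0 < L * n := by positivity
  have hD : 0 < D := by positivity
  have hD2 : D ^ 2 = 16 * (L * n) := by
    rw [hDdef, mul_pow, Real.sq_sqrt hLn.le]; ring
  set lam := D / n with hlamdef
  have hlam : 0 ≤ lam := by positivity
  have hlamn : lam * n = D := div_mul_cancel₀ D hn'.ne'
  have e1 : lam * D = 16 * L := by
    have : lam * D * n = 16 * L * n := by
      calc lam * D * n = (lam * n) * D := by ring
        _ = D * D := by rw [hlamn]
        _ = D ^ 2 := by ring
        _ = 16 * L * n := by rw [hD2]; ring
    exact mul_right_cancel₀ hn'.ne' this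
  have e2 : n * lam ^ 2 = 16 * L := by
    calc n * lam ^ 2 = lam * (lam * n) := by ring
      _ = lam * D := by rw [hlamn]
      _ = 16 * L := e1
  have hch := binTail_le_chernoff (n := n) hε hlam k
  have hh := hoeffding_pm1 hε lam
  have hbase : (0:ℝ) ≤ (1 + ε) / 2 * Real.exp lam + (1 - ε) / 2 * Real.exp (-lam) := by
    obtain ⟨h1, h2⟩ := hε
    have := Real.exp_nonneg lam
    have := Real.exp_nonneg (-lam)
    nlinarith
  have hpow : ((1 + ε) / 2 * Real.exp lam + (1 - ε) / 2 * Real.exp (-lam)) ^ n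
      ≤ Real.exp (ε * lam + lam ^ 2 / 2) ^ n := pow_le_pow_left₀ hbase hh n
  have hexp : Real.exp (ε * lam + lam ^ 2 / 2) ^ n
      = Real.exp (n * (ε * lam + lam ^ 2 / 2)) := by
    rw [← Real.exp_nat_mul]
  calc binTail n ε k ≤ _ := hch
    _ ≤ Real.exp (-(lam * k)) * Real.exp (n * (ε * lam + lam ^ 2 / 2)) := by
        rw [← hexp]
        exact mul_le_mul_of_nonneg_left hpow (Real.exp_nonneg _)
    _ = Real.exp (-(lam * k) + n * (ε * lam + lam ^ 2 / 2)) := (Real.exp_add _ _).symm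
    _ ≤ Real.exp (-(8 * L)) := by
        apply Real.exp_le_exp.2
        have hkk : lam * (ε * n + D) ≤ lam * k := mul_le_mul_of_nonneg_left hk hlam
        nlinarith [e1, e2, hkk]

theorem stmt_14 :
    ∃ m0 : ℕ, ∀ m : ℕ, m0 ≤ m → ∀ i : ℕ, 1 ≤ i → i ≤ m →
      ∀ ε : ℝ, ε ∈ Set.Icc (-1 : ℝ) 1 →
        |ε| ≤ 4 * Real.sqrt (Real.logb 2 m / (sRound m 1 : ℝ)) →
        ∀ y : ℤ, 4 * Real.sqrt (Real.logb 2 m * (sRound m i : ℝ)) <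
            |(y : ℝ) + ε * (sRound m i : ℝ)| →
          binTail (sRound m i) ε (-y) < 1 / (m : ℝ) ^ 2 ∨
            1 - 1 / (m : ℝ) ^ 2 < binTail (sRound m i) ε (-y) := by
  refine ⟨2, ?_⟩
  intro m hm i hi1 him ε hε _ y hy
  set n := sRound m i with hndef
  set L := Real.logb 2 m with hLdef
  have hm1 : (1:ℝ) < m := by exact_mod_cast hm
  have hL : 0 < L := Real.logb_pos one_lt_two hm1
  have hn1 : 1 ≤ n := by
    have hmem : m ∈ Finset.Icc i m := Finset.mem_Icc.2 ⟨him, le_refl m⟩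
    have h1 := Finset.single_le_sum (f := fun j => lRound m j)
      (fun j _ => Nat.zero_le _) hmem
    have h2 : lRound m m = 1 := by unfold lRound; omega
    rw [h2] at h1
    exact h1
  -- the bound exp(-(8L)) < 1/m^2
  have hlogm : 0 < Real.log m := Real.log_pos hm1
  have hLlog : Real.log m ≤ L := by
    rw [hLdef, Real.logb, le_div_iff₀ (Real.log_pos one_lt_two)]
    nlinarith [Real.log_two_lt_d9]
  have hsmall : Real.exp (-(8 * L)) < 1 / (m : ℝ) ^ 2 := by
    have hmpos : (0:ℝ) < m := by linarith
    have heq : (1:ℝ) / (m:ℝ) ^ 2 = Real.exp (-(2 * Real.log m)) := by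
      rw [Real.exp_neg]
      congr 1
      rw [two_mul, Real.exp_add, Real.exp_log hmpos]
      ring
    rw [heq]
    apply Real.exp_lt_exp.2
    nlinarith
  rcases lt_abs.1 hy with hpos | hneg
  · -- y + εn > D : tail near 1
    right
    have hcompl := binTail_compl n ε (-y)
    have h1y : (1 : ℤ) - -y = y + 1 := by ring
    rw [h1y] at hcompl
    have hε' : -ε ∈ Set.Icc (-1:ℝ) 1 := by
      obtain ⟨h1, h2⟩ := hε
      exact ⟨by linarith, by linarith⟩
    have hk : (-ε) * n + 4 * Real.sqrt (L * n) ≤ ((y + 1 : ℤ) : ℝ) := by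
      push_cast
      nlinarith
    have := tail_small hn1 hε' hL hk
    have hlt : binTail n (-ε) (y + 1) < 1 / (m:ℝ) ^ 2 := lt_of_le_of_lt this hsmall
    linarith
  · -- y + εn < -D : tail near 0
    left
    have hk : ε * n + 4 * Real.sqrt (L * n) ≤ ((-y : ℤ) : ℝ) := by
      push_cast
      nlinarith
    have := tail_small hn1 hε hL hk
    linarith
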